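/- In the primal–dual ERM setting, assume in addition that ξ* is σ-strongly convex for some σ > 0. Let ε > 0 and let α ∈ ℝ^n satisfy D(α) − D* ≤ ε. Then the recovered primal point w(α) = ∇g*(X α) satisfies P(w(α)) − P* ≤ ε (1 + L/σ). -/

import Mathlib

open scoped RealInnerProductSpace

section helpers

private lemma aux_t_limit {a b c : ℝ} (h : ∀ t : ℝ, 0 < t → t < 1 → a ≤ b + t * c) : a ≤ b := by
  by_contra hab
  push_neg at hab
  rcases le_or_gt c 0 with hc | hc
  · have := h (1/2) (by norm_num) (by norm_num)
    nlinarith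
  · have hq : (0:ℝ) < (a-b)/(2*c) := div_pos (by linarith) (by linarith)
    have ht0 : (0:ℝ) < min (1/2) ((a-b)/(2*c)) := lt_min (by norm_num) hq
    have ht1 : min (1/2) ((a-b)/(2*c)) < 1 := lt_of_le_of_lt (min_le_left _ _) (by norm_num)
    have h1 := h _ ht0 ht1
    have h2 : min (1/2) ((a-b)/(2*c)) * c ≤ (a-b)/(2*c) * c :=
      mul_le_mul_of_nonneg_right (min_le_right _ _) hc.le
    have h3 : (a-b)/(2*c) * c = (a-b)/2 := by
      field_simp
    nlinarith

variable {E : Type*} [NormedAddCommGroup E] [InnerProductSpace ℝ E]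

private lemma subgrad_of_approx {f : E → ℝ} (hf : ConvexOn ℝ Set.univ f) {x v : E} {c : ℝ}
    (h : ∀ y, f x + ⟪v, y - x⟫ - c * ‖y - x‖ ^ 2 ≤ f y) (y : E) :
    f x + ⟪v, y - x⟫ ≤ f y := by
  apply aux_t_limit (c := c * ‖y - x‖ ^ 2)
  intro t ht0 ht1
  have h1 := h (x + t • (y - x))
  have h2 : x + t • (y - x) = (1 - t) • x + t • y := by module
  have hcomb : f (x + t • (y - x)) ≤ (1 - t) * f x + t * f y := by
    rw [h2]
    simpa using hf.2 (Set.mem_univ x) (Set.mem_univ y) (by linarith : (0:ℝ) ≤ 1 - t) ht0.le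
      (by ring)
  have h3 : (x + t • (y - x)) - x = t • (y - x) := by abel
  rw [h3, real_inner_smul_right, norm_smul, Real.norm_eq_abs, abs_of_pos ht0, mul_pow] at h1
  have := h1.trans hcomb
  have h4 : f x + ⟪v, y - x⟫ ≤ f y + t * (c * ‖y - x‖ ^ 2) := by nlinarith
  exact h4

private lemma strong_subgrad {f : E → ℝ} {σ : ℝ}
    (hsc : ConvexOn ℝ Set.univ (fun u => f u - σ / 2 * ‖u‖ ^ 2)) {x s : E}
    (hsub : ∀ y, f x + ⟪s, y - x⟫ ≤ f y) (y : E) :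
    f x + ⟪s, y - x⟫ + σ / 2 * ‖y - x‖ ^ 2 ≤ f y := by
  have hstrong : StrongConvexOn Set.univ σ f := strongConvexOn_iff_convex.mpr hsc
  apply aux_t_limit (c := σ / 2 * ‖y - x‖ ^ 2)
  intro t ht0 ht1
  have hcomb := hstrong.2 (Set.mem_univ x) (Set.mem_univ y) (by linarith : (0:ℝ) ≤ 1 - t) ht0.le
    (by ring)
  have h2 : (1 - t) • x + t • y = x + t • (y - x) := by module
  rw [h2] at hcomb
  have h1 := hsub (x + t • (y - x))
  have h3 : (x + t • (y - x)) - x = t • (y - x) := by abel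
  rw [h3, real_inner_smul_right] at h1
  have hn : ‖x - y‖ ^ 2 = ‖y - x‖ ^ 2 := by rw [norm_sub_rev]
  simp only [smul_eq_mul] at hcomb
  rw [hn] at hcomb
  nlinarith [hcomb, h1]

private lemma exists_subgrad {E : Type*} [NormedAddCommGroup E] [InnerProductSpace ℝ E]
    [FiniteDimensional ℝ E] {f : E → ℝ} (hf : ConvexOn ℝ Set.univ f) (x : E) :
    ∃ s : E, ∀ y, f x + ⟪s, y - x⟫ ≤ f y := by
  classical
  set S : Set (E × ℝ) := {p | f p.1 < p.2} with hS
  have hcont : Continuous f := by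
    rw [← continuousOn_univ]
    exact hf.continuousOn isOpen_univ
  have hSopen : IsOpen S := isOpen_lt (hcont.comp continuous_fst) continuous_snd
  have hSconv : Convex ℝ S := by
    rintro ⟨p1, p2⟩ hp ⟨q1, q2⟩ hq a b ha hb hab
    simp only [hS, Set.mem_setOf_eq] at hp hq ⊢
    have h1 : f (a • p1 + b • q1) ≤ a * f p1 + b * f q1 := by
      simpa using hf.2 (Set.mem_univ p1) (Set.mem_univ q1) ha hb hab
    have h2 : a * f p1 + b * f q1 < a * p2 + b * q2 := by
      rcases eq_or_lt_of_le ha with ha0 | ha0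
      · have hb1 : b = 1 := by linarith
        rw [← ha0, hb1]; simpa using hq
      · rcases eq_or_lt_of_le hb with hb0 | hb0
        · have ha1 : a = 1 := by linarith
          rw [← hb0, ha1]; simpa using hp
        · exact add_lt_add ((mul_lt_mul_iff_right₀ ha0).mpr hp) ((mul_lt_mul_iff_right₀ hb0).mpr hq)
    exact lt_of_le_of_lt (by simpa using h1) (by simpa using h2)
  have hxS : (x, f x) ∉ S := by simp [hS]
  obtain ⟨ℓ, hℓ⟩ := geometric_hahn_banach_open_point hSconv hSopen hxS
  set c : ℝ := ℓ (0, 1) with hc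
  have hdecomp : ∀ (y : E) (t : ℝ), ℓ (y, t) = ℓ (y, 0) + t * c := by
    intro y t
    have h1 : ((y, t) : E × ℝ) = (y, 0) + t • ((0 : E), (1 : ℝ)) := by
      simp [Prod.ext_iff]
    rw [h1, map_add, map_smul, smul_eq_mul, hc]
  have hcneg : c < 0 := by
    have h1 := hℓ (x, f x + 1) (by simp [hS])
    rw [hdecomp x (f x + 1), hdecomp x (f x)] at h1
    nlinarith
  have hkey : ∀ y, ℓ (y, 0) + f y * c ≤ ℓ (x, 0) + f x * c := by
    intro y
    apply aux_t_limit (c := -c)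
    intro t ht0 _
    have h1 := hℓ (y, f y + t) (by simp [hS]; linarith)
    rw [hdecomp y (f y + t), hdecomp x (f x)] at h1
    nlinarith
  set j : E →L[ℝ] ℝ := ℓ.comp (ContinuousLinearMap.inl ℝ E ℝ) with hj
  have hjapp : ∀ v : E, j v = ℓ (v, 0) := fun v => rfl
  refine ⟨(-c)⁻¹ • ((InnerProductSpace.toDual ℝ E).symm j), fun y => ?_⟩
  have hsv : ⟪(-c)⁻¹ • ((InnerProductSpace.toDual ℝ E).symm j), y - x⟫
      = (-c)⁻¹ * (ℓ (y, 0) - ℓ (x, 0)) := by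
    rw [real_inner_smul_left, InnerProductSpace.toDual_symm_apply]
    congr 1
    rw [map_sub, hjapp, hjapp]
  rw [hsv]
  have h2 : ℓ (y, 0) - ℓ (x, 0) ≤ (f x - f y) * c := by linarith [hkey y]
  have h3 : (-c)⁻¹ * (ℓ (y, 0) - ℓ (x, 0)) ≤ (-c)⁻¹ * ((f x - f y) * c) :=
    mul_le_mul_of_nonneg_left h2 (inv_nonneg.mpr (by linarith))
  have hc0 : c ≠ 0 := ne_of_lt hcneg
  have h4 : (-c)⁻¹ * ((f x - f y) * c) = f y - f x := by
    rw [show (f x - f y) * c = c * (f x - f y) by ring, ← mul_assoc]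
    rw [show (-c)⁻¹ * c = -1 by field_simp]
    ring
  linarith

private lemma conj_FY {f fs : E → ℝ} (h : ∀ z, IsLUB (Set.range fun v => ⟪z, v⟫ - f v) (fs z))
    (z v : E) : ⟪z, v⟫ - f v ≤ fs z := (h z).1 ⟨v, rfl⟩

private lemma conj_convexOn {f fs : E → ℝ}
    (h : ∀ z, IsLUB (Set.range fun v => ⟪z, v⟫ - f v) (fs z)) : ConvexOn ℝ Set.univ fs := by
  refine ⟨convex_univ, fun z1 _ z2 _ a b ha hb hab => ?_⟩
  apply (h _).2
  rintro _ ⟨v, rfl⟩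
  show ⟪a • z1 + b • z2, v⟫ - f v ≤ a • fs z1 + b • fs z2
  have hb1 : b = 1 - a := by linarith
  have he : ⟪a • z1 + b • z2, v⟫ - f v
      = a * (⟪z1, v⟫ - f v) + b * (⟪z2, v⟫ - f v) := by
    rw [inner_add_left, real_inner_smul_left, real_inner_smul_left, hb1]
    ring
  rw [he]
  have h1 := mul_le_mul_of_nonneg_left (conj_FY h z1 v) ha
  have h2 := mul_le_mul_of_nonneg_left (conj_FY h z2 v) hb
  simpa using add_le_add h1 h2

private lemma conj_eq_of_subgrad {f fs : E → ℝ}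
    (h : ∀ z, IsLUB (Set.range fun v => ⟪z, v⟫ - f v) (fs z)) {v s : E}
    (hs : ∀ y, f v + ⟪s, y - v⟫ ≤ f y) : fs s = ⟪s, v⟫ - f v := by
  refine le_antisymm ((h s).2 ?_) (conj_FY h s v)
  rintro _ ⟨y, rfl⟩
  show ⟪s, y⟫ - f y ≤ ⟪s, v⟫ - f v
  have h1 := hs y
  rw [inner_sub_right] at h1
  linarith

variable [CompleteSpace E]

private lemma line_hasDerivAt (x d : E) (t : ℝ) :
    HasDerivAt (fun t : ℝ => x + t • d) d t := by
  simpa using ((hasDerivAt_id t).smul_const d).const_add x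

omit [CompleteSpace E] in
private lemma dummy : True := trivial

private lemma comp_line_hasDerivAt {f : E → ℝ} {g' : E} {x d : E} {t : ℝ}
    (hf : HasGradientAt f g' (x + t • d)) :
    HasDerivAt (fun t : ℝ => f (x + t • d)) ⟪g', d⟫ t := by
  have h := hf.hasFDerivAt.comp_hasDerivAt t (line_hasDerivAt x d t)
  simpa [InnerProductSpace.toDual, Function.comp_def] using h

private lemma grad_ineq {f : E → ℝ} (hf : ConvexOn ℝ Set.univ f) {x g' : E}
    (hx : HasGradientAt f g' x) (y : E) : f x + ⟪g', y - x⟫ ≤ f y := by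
  set d := y - x with hd
  have hx' : HasGradientAt f g' (x + (0:ℝ) • d) := by simpa using hx
  have hder : HasDerivAt (fun t : ℝ => f (x + t • d)) ⟪g', d⟫ 0 :=
    comp_line_hasDerivAt hx'
  have hslope : Filter.Tendsto (slope (fun t : ℝ => f (x + t • d)) 0) (nhdsWithin 0 (Set.Ioi 0))
      (nhds ⟪g', d⟫) := by
    have := hasDerivAt_iff_tendsto_slope.mp hder
    exact this.mono_left (nhdsWithin_mono 0 (fun t ht => ne_of_gt ht))
  have hbound : ∀ᶠ t in nhdsWithin (0:ℝ) (Set.Ioi 0),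
      slope (fun t : ℝ => f (x + t • d)) 0 t ≤ f y - f x := by
    filter_upwards [Ioo_mem_nhdsGT_of_mem (Set.mem_Ico.mpr ⟨le_refl 0, zero_lt_one⟩)] with t ht
    obtain ⟨ht0, ht1⟩ := ht
    have hcomb : f (x + t • d) ≤ (1 - t) * f x + t * f y := by
      have h1 : x + t • d = (1 - t) • x + t • y := by
        rw [hd]; module
      rw [h1]
      have := hf.2 (Set.mem_univ x) (Set.mem_univ y) (by linarith : (0:ℝ) ≤ 1 - t) ht0.le
        (by ring)
      simpa using this
    rw [slope_def_field]
    have h0 : f (x + (0:ℝ) • d) = f x := by simp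
    rw [h0, sub_zero, div_le_iff₀ ht0]
    nlinarith
  have hlim : ⟪g', d⟫ ≤ f y - f x := le_of_tendsto hslope hbound
  linarith

private lemma descent_lemma {f : E → ℝ} {f' : E → E} {C : ℝ} (hC : 0 ≤ C)
    (hd : ∀ z, HasGradientAt f (f' z) z)
    (hlip : ∀ a b, ‖f' a - f' b‖ ≤ C * ‖a - b‖) (x y : E) :
    f y ≤ f x + ⟪f' x, y - x⟫ + C / 2 * ‖y - x‖ ^ 2 := by
  set d := y - x with hdd
  have hcont : Continuous f' := by
    apply LipschitzWith.continuous (K := Real.toNNReal C)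
    apply LipschitzWith.of_dist_le_mul
    intro a b
    rw [dist_eq_norm, dist_eq_norm]
    simpa [Real.coe_toNNReal _ hC] using hlip a b
  set G : ℝ → ℝ := fun t => ⟪f' (x + t • d), d⟫ with hG
  have hGcont : Continuous G := by
    apply Continuous.inner
    · exact hcont.comp (continuous_const.add (continuous_id.smul continuous_const))
    · exact continuous_const
  have hψ : ∀ t ∈ Set.uIcc (0:ℝ) 1, HasDerivAt (fun t : ℝ => f (x + t • d)) (G t) t :=
    fun t _ => comp_line_hasDerivAt (hd _)
  have hint : IntervalIntegrable G MeasureTheory.volume 0 1 := hGcont.intervalIntegrable 0 1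
  have hftc : ∫ t in (0:ℝ)..1, G t = f (x + (1:ℝ) • d) - f (x + (0:ℝ) • d) :=
    intervalIntegral.integral_eq_sub_of_hasDerivAt hψ hint
  have hH : ∀ t ∈ Set.Icc (0:ℝ) 1, G t ≤ ⟪f' x, d⟫ + C * ‖d‖ ^ 2 * t := by
    intro t ht
    have h1 : G t - ⟪f' x, d⟫ = ⟪f' (x + t • d) - f' x, d⟫ := by
      rw [inner_sub_left]
    have h2 : ⟪f' (x + t • d) - f' x, d⟫ ≤ ‖f' (x + t • d) - f' x‖ * ‖d‖ :=
      real_inner_le_norm _ _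
    have h3 : ‖f' (x + t • d) - f' x‖ ≤ C * ‖t • d‖ := by
      simpa using hlip (x + t • d) x
    have h4 : ‖t • d‖ = t * ‖d‖ := by
      rw [norm_smul, Real.norm_eq_abs, abs_of_nonneg ht.1]
    have h5 : ‖f' (x + t • d) - f' x‖ ≤ C * t * ‖d‖ := by rw [mul_assoc, ← h4]; exact h3
    nlinarith [norm_nonneg d, mul_le_mul_of_nonneg_right h5 (norm_nonneg d)]
  have hint2 : IntervalIntegrable (fun t => ⟪f' x, d⟫ + C * ‖d‖ ^ 2 * t)
      MeasureTheory.volume 0 1 :=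
    (continuous_const.add (continuous_const.mul continuous_id)).intervalIntegrable 0 1
  have hmono : ∫ t in (0:ℝ)..1, G t ≤ ∫ t in (0:ℝ)..1, (⟪f' x, d⟫ + C * ‖d‖ ^ 2 * t) :=
    intervalIntegral.integral_mono_on zero_le_one hint hint2 hH
  have hrhs : ∫ t in (0:ℝ)..1, (⟪f' x, d⟫ + C * ‖d‖ ^ 2 * t) = ⟪f' x, d⟫ + C / 2 * ‖d‖ ^ 2 := by
    have hi2 : IntervalIntegrable (fun t : ℝ => C * ‖d‖ ^ 2 * t) MeasureTheory.volume 0 1 :=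
      (continuous_const.mul continuous_id).intervalIntegrable 0 1
    rw [intervalIntegral.integral_add intervalIntegrable_const hi2]
    rw [intervalIntegral.integral_const_mul, integral_id]
    simp
    ring
  have h5 : f (x + (1:ℝ) • d) = f y := by rw [hdd]; congr 1; module
  have h6 : f (x + (0:ℝ) • d) = f x := by simp
  rw [h5, h6] at hftc
  linarith [hftc ▸ hmono.trans_eq hrhs]

omit [CompleteSpace E] in
private lemma inner_convexOn (v : E) : ConvexOn ℝ Set.univ (fun z : E => ⟪v, z⟫) := by
  refine ⟨convex_univ, fun x _ y _ a b _ _ _ => le_of_eq ?_⟩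
  simp [inner_add_right, real_inner_smul_right]

private lemma inner_hasGradientAt (v : E) (z : E) :
    HasGradientAt (fun z : E => ⟪v, z⟫) v z := by
  have h : HasFDerivAt (fun z : E => ⟪v, z⟫) (innerSL ℝ v) z :=
    (innerSL ℝ v).hasFDerivAt
  rw [hasGradientAt_iff_hasFDerivAt]
  exact h

private lemma cocoercivity {f : E → ℝ} {f' : E → E} {C : ℝ} (hC : 0 < C)
    (hconv : ConvexOn ℝ Set.univ f)
    (hd : ∀ z, HasGradientAt f (f' z) z)
    (hlip : ∀ a b, ‖f' a - f' b‖ ≤ C * ‖a - b‖) (x y : E) :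
    f x + ⟪f' x, y - x⟫ + 1 / (2 * C) * ‖f' y - f' x‖ ^ 2 ≤ f y := by
  set φ : E → ℝ := fun z => f z + ⟪-(f' x), z⟫ with hφ
  have hφconv : ConvexOn ℝ Set.univ φ := hconv.add (inner_convexOn _)
  have hφgrad : ∀ z, HasGradientAt φ (f' z - f' x) z := by
    intro z
    have h1 := (hd z).hasFDerivAt.add (inner_hasGradientAt (-(f' x)) z).hasFDerivAt
    rw [hasGradientAt_iff_hasFDerivAt, sub_eq_add_neg, map_add]
    exact h1
  have hφlip : ∀ a b, ‖(f' a - f' x) - (f' b - f' x)‖ ≤ C * ‖a - b‖ := by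
    intro a b
    rw [sub_sub_sub_cancel_right]
    exact hlip a b
  have hmin : ∀ z, φ x ≤ φ z := by
    intro z
    have := grad_ineq hφconv (hφgrad x) z
    simpa using this
  have hstep := descent_lemma hC.le hφgrad hφlip y (y - (1/C) • (f' y - f' x))
  have h2 : (y - (1/C) • (f' y - f' x)) - y = -((1/C) • (f' y - f' x)) := by abel
  rw [h2] at hstep
  have h3 : ⟪f' y - f' x, -((1/C) • (f' y - f' x))⟫ = -(1/C) * ‖f' y - f' x‖ ^ 2 := by
    rw [inner_neg_right, real_inner_smul_right, real_inner_self_eq_norm_sq]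
    ring
  have h4 : ‖-((1/C) • (f' y - f' x))‖ ^ 2 = (1/C)^2 * ‖f' y - f' x‖ ^ 2 := by
    rw [norm_neg, norm_smul, Real.norm_eq_abs, abs_of_pos (by positivity), mul_pow]
  rw [h3, h4] at hstep
  have h5 := (hmin (y - (1/C) • (f' y - f' x))).trans hstep
  have h6 : φ x = f x - ⟪f' x, x⟫ := by rw [hφ]; simp [inner_neg_left]; ring
  have h7 : φ y = f y - ⟪f' x, y⟫ := by rw [hφ]; simp [inner_neg_left]; ring
  rw [h6, h7] at h5
  have h8 : ⟪f' x, y - x⟫ = ⟪f' x, y⟫ - ⟪f' x, x⟫ := inner_sub_right _ _ _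
  have hC' : C ≠ 0 := hC.ne'
  rw [h8]
  have h9 : C / 2 * ((1/C)^2 * ‖f' y - f' x‖ ^ 2) = 1/(2*C) * ‖f' y - f' x‖ ^ 2 := by
    field_simp
  rw [h9] at h5
  have h11 : (1/C) * ‖f' y - f' x‖ ^ 2 = 2 * (1/(2*C) * ‖f' y - f' x‖ ^ 2) := by
    field_simp
  linarith [h5]

end helpers

set_option maxHeartbeats 1000000 in
/-- part 1 of Theorem 5 of the paper / Lee–Chang: in the
primal–dual ERM setting with `ξ*` being `σ`-strongly convex, an `ε`-accurate dual
solution `α` yields a primal point `w(α) = ∇g*(Xα)` with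
`P(w(α)) − P* ≤ ε(1 + L/σ)`. -/
theorem dual_to_primal_strongly_convex {d n : ℕ} (L σ : ℝ) (hL : 0 < L) (hσ : 0 < σ)
    (X : Matrix (Fin d) (Fin n) ℝ)
    (ξ : EuclideanSpace ℝ (Fin n) → ℝ) (hξ : ConvexOn ℝ Set.univ ξ)
    (g : EuclideanSpace ℝ (Fin d) → ℝ) (hg : ConvexOn ℝ Set.univ g)
    (gstar : EuclideanSpace ℝ (Fin d) → ℝ)
    (hgstar : ∀ z, IsLUB (Set.range fun w => ⟪z, w⟫ - g w) (gstar z))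
    (ξstar : EuclideanSpace ℝ (Fin n) → ℝ)
    (hξstar : ∀ u, IsLUB (Set.range fun v => ⟪u, v⟫ - ξ v) (ξstar u))
    (P : EuclideanSpace ℝ (Fin d) → ℝ)
    (hP : ∀ w, P w = ξ (Matrix.toEuclideanLin X.transpose w) + g w)
    (Pstar : ℝ) (hPlb : ∀ w, Pstar ≤ P w) (hPatt : ∃ w, P w = Pstar)
    (D : EuclideanSpace ℝ (Fin n) → ℝ)
    (hD : ∀ α, D α = gstar (Matrix.toEuclideanLin X α) + ξstar (-α))
    (Dstar : ℝ) (hDlb : ∀ α, Dstar ≤ D α) (hDatt : ∃ α, D α = Dstar)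
    (hgdiff : Differentiable ℝ gstar)
    (hlip : LipschitzWith (Real.toNNReal L)
      (fun α => gradient (fun β => gstar (Matrix.toEuclideanLin X β)) α))
    (hstrong : ConvexOn ℝ Set.univ (fun u => ξstar u - σ / 2 * ‖u‖ ^ 2))
    (ε : ℝ) (hε : 0 < ε) (α : EuclideanSpace ℝ (Fin n))
    (hα : D α - Dstar ≤ ε) :
    P (gradient gstar (Matrix.toEuclideanLin X α)) - Pstar ≤ ε * (1 + L / σ) := by
  classical
  set A := Matrix.toEuclideanLin X with hAdef
  set At := Matrix.toEuclideanLin X.transpose with hAtdef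
  have hadj : ∀ (v : EuclideanSpace ℝ (Fin n)) (w : EuclideanSpace ℝ (Fin d)),
      ⟪A v, w⟫ = ⟪v, At w⟫ := by
    intro v w
    have h1 : At = LinearMap.adjoint A := by
      rw [hAtdef, hAdef, ← Matrix.toEuclideanLin_conjTranspose_eq_adjoint,
        Matrix.conjTranspose_eq_transpose_of_trivial]
    rw [h1, LinearMap.adjoint_inner_right]
  set F : EuclideanSpace ℝ (Fin n) → ℝ := fun β => gstar (A β) with hFdef
  -- chain rule
  have hFgrad : ∀ β, HasGradientAt F (At (gradient gstar (A β))) β := by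
    intro β
    have hz : HasGradientAt gstar (gradient gstar (A β)) (A β) :=
      (hgdiff (A β)).hasGradientAt
    have hAf : HasFDerivAt (fun v => A v) (LinearMap.toContinuousLinearMap A) β :=
      (LinearMap.toContinuousLinearMap A).hasFDerivAt
    have hcomp := hz.hasFDerivAt.comp β hAf
    rw [hasGradientAt_iff_hasFDerivAt]
    have heq : InnerProductSpace.toDual ℝ _ (At (gradient gstar (A β)))
        = (InnerProductSpace.toDual ℝ _ (gradient gstar (A β))).comp
          (LinearMap.toContinuousLinearMap A) := by
      ext v
      simp only [InnerProductSpace.toDual_apply_apply, ContinuousLinearMap.coe_comp',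
        Function.comp_apply, LinearMap.coe_toContinuousLinearMap']
      show ⟪At (gradient gstar (A β)), v⟫ = ⟪gradient gstar (A β), A v⟫
      rw [real_inner_comm, ← hadj v]
      exact real_inner_comm _ _
    rw [heq]
    exact hcomp
  have hgradF : ∀ β, gradient F β = At (gradient gstar (A β)) := fun β => (hFgrad β).gradient
  have hlipF : ∀ a b, ‖At (gradient gstar (A a)) - At (gradient gstar (A b))‖ ≤ L * ‖a - b‖ := by
    intro a b
    have h1 := hlip.dist_le_mul a b
    simp only [dist_eq_norm] at h1
    rw [Real.coe_toNNReal _ hL.le] at h1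
    calc ‖At (gradient gstar (A a)) - At (gradient gstar (A b))‖
        = ‖gradient F a - gradient F b‖ := by rw [hgradF a, hgradF b]
      _ ≤ L * ‖a - b‖ := h1
  have hgsconv : ConvexOn ℝ Set.univ gstar := conj_convexOn hgstar
  have hξsconv : ConvexOn ℝ Set.univ ξstar := conj_convexOn hξstar
  have hFconv : ConvexOn ℝ Set.univ F := by
    refine ⟨convex_univ, fun a _ b _ s t hs ht hst => ?_⟩
    show gstar (A (s • a + t • b)) ≤ s • F a + t • F b
    rw [map_add, map_smul, map_smul]
    exact hgsconv.2 (Set.mem_univ _) (Set.mem_univ _) hs ht hst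
  obtain ⟨αs, hαs⟩ := hDatt
  set w : EuclideanSpace ℝ (Fin d) := gradient gstar (A α) with hwdef
  set ws : EuclideanSpace ℝ (Fin d) := gradient gstar (A αs) with hwsdef
  set u : EuclideanSpace ℝ (Fin n) := At w with hudef
  set us : EuclideanSpace ℝ (Fin n) := At ws with husdef
  -- approximate subgradient of ξstar at -αs
  have happrox : ∀ y, ξstar (-αs) + ⟪us, y - -αs⟫ - L/2 * ‖y - -αs‖ ^ 2 ≤ ξstar y := by
    intro y
    have h1 : Dstar ≤ D (-y) := hDlb _
    rw [hD (-y), neg_neg] at h1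
    have h2 : F (-y) ≤ F αs + ⟪us, -y - αs⟫ + L/2 * ‖-y - αs‖ ^ 2 :=
      descent_lemma hL.le hFgrad hlipF αs (-y)
    have h3 := hD αs
    rw [hαs] at h3
    have e1 : (-y : EuclideanSpace ℝ (Fin n)) - αs = -(y - -αs) := by abel
    have e2 : ⟪us, -y - αs⟫ = -⟪us, y - -αs⟫ := by rw [e1, inner_neg_right]
    have e3 : ‖(-y : EuclideanSpace ℝ (Fin n)) - αs‖ = ‖y - -αs‖ := by rw [e1, norm_neg]
    rw [e2, e3] at h2
    have hFy : gstar (A (-y)) = F (-y) := rfl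
    have hFs : gstar (A αs) = F αs := rfl
    rw [hFy] at h1
    rw [hFs] at h3
    linarith
  have hsub_us : ∀ y, ξstar (-αs) + ⟪us, y - -αs⟫ ≤ ξstar y :=
    subgrad_of_approx hξsconv happrox
  have hstr_us : ∀ y, ξstar (-αs) + ⟪us, y - -αs⟫ + σ/2 * ‖y - -αs‖ ^ 2 ≤ ξstar y :=
    strong_subgrad hstrong hsub_us
  -- Fenchel equality-type bound for g at gradient points
  have hKI1 : ∀ β : EuclideanSpace ℝ (Fin n),
      g (gradient gstar (A β)) + gstar (A β) ≤ ⟪β, At (gradient gstar (A β))⟫ := by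
    intro β
    obtain ⟨s1, hs1⟩ := exists_subgrad hg (gradient gstar (A β))
    have hconj : gstar s1 = ⟪s1, gradient gstar (A β)⟫ - g (gradient gstar (A β)) :=
      conj_eq_of_subgrad hgstar hs1
    have hgi := grad_ineq hgsconv ((hgdiff (A β)).hasGradientAt) s1
    rw [hconj, inner_sub_right] at hgi
    have e1 : ⟪A β, gradient gstar (A β)⟫ = ⟪β, At (gradient gstar (A β))⟫ := hadj _ _
    have e2 : ⟪s1, gradient gstar (A β)⟫ = ⟪gradient gstar (A β), s1⟫ := real_inner_comm _ _
    have e3 : ⟪gradient gstar (A β), A β⟫ = ⟪A β, gradient gstar (A β)⟫ := real_inner_comm _ _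
    linarith
  -- ξ us upper bound
  have hξus : ξ us ≤ -⟪αs, us⟫ - ξstar (-αs) := by
    obtain ⟨s3, hs3⟩ := exists_subgrad hξ us
    have hconj : ξstar s3 = ⟪s3, us⟫ - ξ us := conj_eq_of_subgrad hξstar hs3
    have h1 := hsub_us s3
    rw [hconj] at h1
    have e1 : ⟪us, s3 - -αs⟫ = ⟪us, s3⟫ + ⟪us, αs⟫ := by
      rw [sub_neg_eq_add, inner_add_right]
    have e2 : ⟪s3, us⟫ = ⟪us, s3⟫ := real_inner_comm _ _
    have e3 : ⟪us, αs⟫ = ⟪αs, us⟫ := real_inner_comm _ _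
    linarith
  -- ξ u upper bound with quadratic term
  have hξu : ξ u ≤ -⟪αs, u⟫ - ξstar (-αs) + 1/(2*σ) * ‖u - us‖ ^ 2 := by
    obtain ⟨s2, hs2⟩ := exists_subgrad hξ u
    have hconj : ξstar s2 = ⟪s2, u⟫ - ξ u := conj_eq_of_subgrad hξstar hs2
    have h1 := hstr_us s2
    rw [hconj] at h1
    have hyoung : ⟪u - us, s2 + αs⟫ ≤ σ/2 * ‖s2 + αs‖ ^ 2 + 1/(2*σ) * ‖u - us‖ ^ 2 := by
      have hcs := real_inner_le_norm (u - us) (s2 + αs)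
      have key : 2*σ*⟪u - us, s2 + αs⟫ ≤ σ^2 * ‖s2 + αs‖ ^ 2 + ‖u - us‖ ^ 2 := by
        nlinarith [sq_nonneg (‖u - us‖ - σ * ‖s2 + αs‖), norm_nonneg (u - us),
          norm_nonneg (s2 + αs)]
      have h2σ : (0:ℝ) < 2*σ := by linarith
      rw [show σ/2 * ‖s2 + αs‖ ^ 2 + 1/(2*σ) * ‖u - us‖ ^ 2
          = (σ^2 * ‖s2 + αs‖ ^ 2 + ‖u - us‖ ^ 2) / (2*σ) by field_simp]
      rw [le_div_iff₀ h2σ]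
      linarith
    have e0 : s2 - -αs = s2 + αs := sub_neg_eq_add _ _
    rw [e0] at h1
    have e1 : ⟪u - us, s2 + αs⟫ = ⟪u, s2 + αs⟫ - ⟪us, s2 + αs⟫ := inner_sub_left _ _ _
    have e2 : ⟪u, s2 + αs⟫ = ⟪u, s2⟫ + ⟪u, αs⟫ := inner_add_right _ _ _
    have e3 : ⟪s2, u⟫ = ⟪u, s2⟫ := real_inner_comm _ _
    have e4 : ⟪u, αs⟫ = ⟪αs, u⟫ := real_inner_comm _ _
    linarith
  -- weak duality
  obtain ⟨w0, hw0⟩ := hPatt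
  have hweak : 0 ≤ Pstar + Dstar := by
    have h1 := conj_FY hξstar (-αs) (At w0)
    have h2 := conj_FY hgstar (A αs) w0
    have h3 : ⟪A αs, w0⟫ = ⟪αs, At w0⟫ := hadj _ _
    have h4 : ⟪-αs, At w0⟫ = -⟪αs, At w0⟫ := inner_neg_left _ _
    have h5 := hP w0
    have h6 := hD αs
    rw [hαs] at h6
    rw [hw0] at h5
    linarith
  -- P ws ≤ Pstar
  have hPws : P ws ≤ Pstar := by
    have h1 := hKI1 αs
    have h3 := hP ws
    have h4 := hD αs
    rw [hαs] at h4
    have hFs : gstar (A αs) = F αs := rfl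
    rw [← hwsdef, ← husdef] at h1
    rw [← husdef] at h3
    linarith
  -- epsilon bound
  have heps : (F α - F αs - ⟪us, α - αs⟫) + σ/2 * ‖α - αs‖ ^ 2 ≤ ε := by
    have h1 := hstr_us (-α)
    have e1 : (-α : EuclideanSpace ℝ (Fin n)) - -αs = -(α - αs) := by abel
    have e2 : ⟪us, -α - -αs⟫ = -⟪us, α - αs⟫ := by rw [e1, inner_neg_right]
    have e3 : ‖(-α : EuclideanSpace ℝ (Fin n)) - -αs‖ = ‖α - αs‖ := by rw [e1, norm_neg]
    rw [e2, e3] at h1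
    have h4 := hD α
    have h5 := hD αs
    rw [hαs] at h5
    linarith
  -- cocoercivity and descent
  have hcoco := cocoercivity hL hFconv hFgrad hlipF αs α
  have hdesc := descent_lemma hL.le hFgrad hlipF α αs
  rw [← hwsdef, ← hwdef, ← husdef, ← hudef] at hcoco
  rw [← hwdef, ← hudef] at hdesc
  -- final assembly
  have hN : ‖u - us‖ ^ 2 ≤ 2 * L * (F α - F αs - ⟪us, α - αs⟫) := by
    have h1 : 1/(2*L) * ‖u - us‖ ^ 2 ≤ F α - F αs - ⟪us, α - αs⟫ := by linarith
    have h2 := mul_le_mul_of_nonneg_left h1 (by linarith : (0:ℝ) ≤ 2*L)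
    rw [show 2*L*(1/(2*L) * ‖u - us‖ ^ 2) = ‖u - us‖ ^ 2 by field_simp] at h2
    exact h2
  have hPw : P w = ξ u + g w := by
    have := hP w
    rw [← hudef] at this
    exact this
  have hPws' : P ws = ξ us + g ws := by
    have := hP ws
    rw [← husdef] at this
    exact this
  have hKw := hKI1 α
  rw [← hwdef, ← hudef] at hKw
  have hgfy : ⟪αs, us⟫ - g ws ≤ F αs := by
    have := conj_FY hgstar (A αs) ws
    rw [hadj, ← husdef] at this
    exact this
  have hξfy : -⟪αs, us⟫ - ξ us ≤ ξstar (-αs) := by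
    have := conj_FY hξstar (-αs) us
    rw [inner_neg_left] at this
    exact this
  have hQ : ‖αs - α‖ ^ 2 = ‖α - αs‖ ^ 2 := by rw [norm_sub_rev]
  have hip : ⟪u, αs - α⟫ = ⟪αs, u⟫ - ⟪α, u⟫ := by
    rw [inner_sub_right, real_inner_comm u αs, real_inner_comm u α]
  -- P w - P ws ≤ L/2 Q + 1/(2σ) N
  have hmain : P w - P ws ≤ L/2 * ‖α - αs‖ ^ 2 + 1/(2*σ) * ‖u - us‖ ^ 2 := by
    have hFα : gstar (A α) = F α := rfl
    have hFαs : gstar (A αs) = F αs := rfl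
    rw [hPw, hPws']
    rw [hFα] at hKw
    rw [hQ, hip] at hdesc
    linarith
  have hfinal : L/2 * ‖α - αs‖ ^ 2 + 1/(2*σ) * ‖u - us‖ ^ 2 ≤ L/σ * ε := by
    have h1 : 1/(2*σ) * ‖u - us‖ ^ 2 ≤ 1/(2*σ) * (2 * L * (F α - F αs - ⟪us, α - αs⟫)) :=
      mul_le_mul_of_nonneg_left hN (by positivity)
    have h2 : 1/(2*σ) * (2 * L * (F α - F αs - ⟪us, α - αs⟫))
        = L/σ * (F α - F αs - ⟪us, α - αs⟫) := by field_simp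
    have h3 : L/2 * ‖α - αs‖ ^ 2 = L/σ * (σ/2 * ‖α - αs‖ ^ 2) := by field_simp
    have h4 : L/σ * (F α - F αs - ⟪us, α - αs⟫) + L/σ * (σ/2 * ‖α - αs‖ ^ 2) ≤ L/σ * ε := by
      rw [← mul_add]
      exact mul_le_mul_of_nonneg_left heps (by positivity)
    linarith
  have hlast : L/σ * ε ≤ ε * (1 + L/σ) := by
    have : ε * (1 + L/σ) = ε + ε * (L/σ) := by ring
    rw [this]
    have : L/σ * ε = ε * (L/σ) := by ring
    rw [this]
    linarith
  linarith
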